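/- Let X and Y be compact convex subsets of ℝ² with nonempty interiors such that: (i) X is not contained under translation in Y; (ii) Y is not contained under translation in X; and (iii) for every t ∈ ℝ², the intersection X ∩ (t + Y) is contained under translation in the unit square [0,1]². Then the width of X is at most 7 and the width of Y is at most 7. -/

import Mathlib

set_option maxHeartbeats 1000000

open MeasureTheory Pointwise

noncomputable section

abbrev Plane := EuclideanSpace ℝ (Fin 2)

/-- The width of a set `K ⊆ ℝ²`: the infimum over unit vectors `u` of the
extent of `K` in the direction `u`. -/
noncomputable def width (K : Set Plane) : ℝ :=
  sInf {w : ℝ | ∃ u : Plane, ‖u‖ = 1 ∧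
    w = sSup ((fun p => (inner ℝ p u : ℝ)) '' K) - sInf ((fun p => (inner ℝ p u : ℝ)) '' K)}

/-- `A` is contained under translation in `B`. -/
def ContainedUnderTranslation (A B : Set Plane) : Prop :=
  ∃ v : Plane, v +ᵥ A ⊆ B

/-- The unit square `[0,1]²` in the plane. -/
def unitSquare : Set Plane := {p : Plane | ∀ i, p i ∈ Set.Icc (0 : ℝ) 1}

-- poly core for k1 : a*m*s + b*(s^2-a^2) ≥ (283/50) s^2
lemma p1 (a b m s : ℝ) (hb : 0 ≤ b) (hba : b ≤ a) (hab : 7 ≤ a + b)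
    (hm : 7 ≤ m) (hsa : a ≤ s) (hsm : s ≤ m) :
    (283/50) * s^2 ≤ a*m*s + b*(s^2 - a^2) := by
  have ha : 7/2 ≤ a := by linarith
  rcases le_or_gt s 7 with h7 | h7
  · rcases le_or_gt a 7 with ha7 | ha7
    · have hred : (283/50)*s^2 ≤ 7*a*s + (7-a)*(s^2-a^2) := by
        nlinarith [mul_nonneg (mul_nonneg (by linarith : (0:ℝ) ≤ 7 - s) (by linarith : (0:ℝ) ≤ s - a)) (by linarith : (0:ℝ) ≤ a - 67/50),
          mul_nonneg (sq_nonneg (a - 14/3)) (by linarith : (0:ℝ) ≤ a + 7/3),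
          mul_nonneg (by linarith : (0:ℝ) ≤ 7 - s) (by linarith : (0:ℝ) ≤ s - a),
          sq_nonneg (s - a), sq_nonneg (s-7)]
      have h2 : (7-a)*(s^2-a^2) ≤ b*(s^2-a^2) := by
        apply mul_le_mul_of_nonneg_right (by linarith) (by nlinarith)
      nlinarith [mul_nonneg (mul_nonneg (by linarith : (0:ℝ) ≤ a) (by linarith : (0:ℝ) ≤ m - 7)) (by linarith : (0:ℝ) ≤ s)]
    · nlinarith [mul_nonneg hb (by nlinarith : (0:ℝ) ≤ s^2 - a^2), mul_pos (by linarith : (0:ℝ) < a - 283/50) (by nlinarith : (0:ℝ) < m*s), mul_nonneg (by linarith : (0:ℝ) ≤ a) (by nlinarith : (0:ℝ) ≤ m*s - s^2)]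
  · -- s > 7 : use m ≥ s : reduce to (a+b-283/50) s^2 ≥ a*b^2? no: b*(s^2-a^2)+a s^2 ≥ ...
    have h1 : a*s*s ≤ a*m*s := by nlinarith [mul_nonneg (mul_nonneg (show (0:ℝ) ≤ a by linarith) (show (0:ℝ) ≤ m - s by linarith)) (show (0:ℝ) ≤ s by linarith)]
    have hred : (283/50)*s^2 ≤ a*s^2 + b*(s^2-a^2) := by
      rcases le_or_gt a 7 with ha7 | ha7
      · have hb7 : 7 - a ≤ b := by linarith
        have : (283/50)*s^2 ≤ a*s^2 + (7-a)*(s^2-a^2) := by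
          nlinarith [mul_nonneg (sq_nonneg (a-14/3)) (by linarith : (0:ℝ) ≤ a + 7/3),
            mul_nonneg (mul_nonneg (by linarith : (0:ℝ) ≤ s + 7) (by linarith : (0:ℝ) ≤ s - 7)) (by linarith : (0:ℝ) ≤ 7 - a + 67/50),
            sq_nonneg (s-7)]
        nlinarith [mul_le_mul_of_nonneg_right hb7 (by nlinarith : (0:ℝ) ≤ s^2 - a^2)]
      · nlinarith [mul_nonneg hb (by nlinarith : (0:ℝ) ≤ s^2 - a^2)]
    nlinarith

lemma p2 (a b m s : ℝ) (hb : 0 ≤ b) (hba : b ≤ a) (hab : 7 ≤ a + b)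
    (hm : 7 ≤ m) (hmab : a + b ≤ m) (hsb : b ≤ s) (hsm : s ≤ m) :
    (283/50) * s^2 ≤ b*m*s + a*(s^2 - b^2) := by
  have ha : 7/2 ≤ a := by linarith
  have hs0 : 0 ≤ s := le_trans hb hsb
  rcases le_or_gt (283/50) a with hA | hA
  · -- a ≥ ρ₄ : ρ₄ s² ≤ a s² = a(s²-b²) + ab² ≤ a(s²-b²) + bms
    have h1 : a*b^2 ≤ b*m*s := by
      nlinarith [mul_nonneg (mul_nonneg hb (show (0:ℝ) ≤ m - a by linarith)) hs0,
        mul_nonneg (mul_nonneg hb (show (0:ℝ) ≤ a by linarith)) (show (0:ℝ) ≤ s - b by linarith)]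
    nlinarith [mul_nonneg (show (0:ℝ) ≤ a - 283/50 by linarith) (sq_nonneg s)]
  · have hb14 : 7 - a ≤ b := by linarith
    rcases le_or_gt s 7 with h7 | h7
    · -- reduce m to 7 :  G = 7bs + a(s²-b²) - ρ₄ s² ≥ 0
      have hred : (283/50)*s^2 ≤ 7*b*s + a*(s^2-b^2) := by
        nlinarith [mul_nonneg (mul_nonneg (show (0:ℝ) ≤ 7 - s by linarith) (show (0:ℝ) ≤ s - b by linarith)) (show (0:ℝ) ≤ 283/50 - a by linarith),
          mul_nonneg (mul_nonneg (show (0:ℝ) ≤ a - b by linarith) (show (0:ℝ) ≤ b - (7-a) by linarith)) (show (0:ℝ) ≤ a by linarith),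
          mul_nonneg (show (0:ℝ) ≤ a - 7/2 by linarith) (show (0:ℝ) ≤ 21/2*a - a^2 - 49/4 by nlinarith [mul_nonneg (show (0:ℝ) ≤ a - 67/50 by linarith) (show (0:ℝ) ≤ 10 - a by linarith)]),
          mul_nonneg (mul_nonneg (show (0:ℝ) ≤ 7 - s by linarith) (show (0:ℝ) ≤ s - b by linarith)) hb,
          sq_nonneg (s - b), sq_nonneg (7 - s), mul_nonneg hb (show (0:ℝ) ≤ s - b by linarith)]
      nlinarith [mul_nonneg (mul_nonneg hb (show (0:ℝ) ≤ m - 7 by linarith)) hs0]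
    · -- s > 7, m ≥ s
      have h1 : b*s*s ≤ b*m*s := by
        nlinarith [mul_nonneg (mul_nonneg hb (show (0:ℝ) ≤ m - s by linarith)) hs0]
      have hred : (283/50)*s^2 ≤ b*s^2 + a*(s^2-b^2) := by
        nlinarith [mul_nonneg (mul_nonneg (show (0:ℝ) ≤ s+7 by linarith) (show (0:ℝ) ≤ s-7 by linarith)) (show (0:ℝ) ≤ a + b - 283/50 by linarith),
          mul_nonneg (mul_nonneg (show (0:ℝ) ≤ a - b by linarith) (show (0:ℝ) ≤ b - (7-a) by linarith)) (show (0:ℝ) ≤ a by linarith),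
          mul_nonneg (show (0:ℝ) ≤ a - 7/2 by linarith) (show (0:ℝ) ≤ 21/2*a - a^2 - 49/4 by nlinarith [mul_nonneg (show (0:ℝ) ≤ a - 67/50 by linarith) (show (0:ℝ) ≤ 10 - a by linarith)]),
          mul_nonneg hb (show (0:ℝ) ≤ 283/50 - a by linarith), sq_nonneg (a-b)]
      linarith

lemma k1 (a b m x : ℝ) (hb : 0 ≤ b) (hba : b ≤ a) (hab : 7 ≤ a + b)
    (hm : 7 ≤ m) (hx : 0 ≤ x) (hxm : x^2 + a^2 ≤ m^2) :
    (283/50) * Real.sqrt (x^2 + a^2) ≤ a*m + b*x := by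
  set s := Real.sqrt (x^2 + a^2) with hs
  have hs0 : 0 ≤ s := Real.sqrt_nonneg _
  have hs2 : s^2 = x^2 + a^2 := Real.sq_sqrt (by positivity)
  have hsm : s ≤ m := by
    rw [hs]
    calc Real.sqrt (x^2+a^2) ≤ Real.sqrt (m^2) := Real.sqrt_le_sqrt hxm
    _ = m := Real.sqrt_sq (by linarith)
  have hsa : a ≤ s := by nlinarith
  have hsx : x ≤ s := by nlinarith
  have h := p1 a b m s hb hba hab hm hsa hsm
  have hxx : b*(s^2 - a^2) ≤ b*x*s := by nlinarith [mul_nonneg hb hx]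
  have hspos : 0 < s := by linarith
  have : (283/50) * s * s ≤ (a*m + b*x)*s := by nlinarith
  exact le_of_mul_le_mul_right (by linarith [this]) hspos

lemma k2 (a b m x : ℝ) (hb : 0 ≤ b) (hba : b ≤ a) (hab : 7 ≤ a + b)
    (hm : 7 ≤ m) (hmab : a + b ≤ m) (hx : 0 ≤ x) (hxm : x^2 + b^2 ≤ m^2) :
    (283/50) * Real.sqrt (x^2 + b^2) ≤ b*m + a*x := by
  set s := Real.sqrt (x^2 + b^2) with hs
  have hs0 : 0 ≤ s := Real.sqrt_nonneg _
  have hs2 : s^2 = x^2 + b^2 := Real.sq_sqrt (by positivity)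
  have hsm : s ≤ m := by
    rw [hs]
    calc Real.sqrt (x^2+b^2) ≤ Real.sqrt (m^2) := Real.sqrt_le_sqrt hxm
    _ = m := Real.sqrt_sq (by linarith)
  have hsb : b ≤ s := by nlinarith
  have hsx : x ≤ s := by nlinarith
  rcases eq_or_lt_of_le hs0 with h0 | hspos
  · have : x = 0 ∧ b = 0 := by constructor <;> nlinarith
    rw [← h0, this.1, this.2]
    norm_num
  · have h := p2 a b m s hb hba hab hm hmab hsb hsm
    have hxx : a*(s^2 - b^2) ≤ a*x*s := by nlinarith [mul_nonneg (mul_nonneg (show (0:ℝ) ≤ a by linarith) hx) (show (0:ℝ) ≤ s - x by linarith)]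
    have : (283/50) * s * s ≤ (b*m + a*x)*s := by nlinarith
    exact le_of_mul_le_mul_right (by linarith [this]) hspos

lemma cs_shift (A B d1 d2 r T : ℝ) (hd : d1^2 + d2^2 ≤ r^2) (hr : 0 ≤ r)
    (hT : r * Real.sqrt (A^2+B^2) ≤ T) : 0 ≤ T + (A*d1 + B*d2) := by
  set S := Real.sqrt (A^2+B^2) with hS
  have hS0 : 0 ≤ S := Real.sqrt_nonneg _
  have hS2 : S^2 = A^2 + B^2 := Real.sq_sqrt (by positivity)
  have hcs : (A*d1 + B*d2)^2 ≤ (S*r)^2 := by nlinarith [sq_nonneg (A*d2 - B*d1), sq_nonneg A, sq_nonneg B]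
  have h2 : -(S*r) ≤ A*d1 + B*d2 := by nlinarith [sq_nonneg (A*d1 + B*d2 + S*r), mul_nonneg hS0 hr]
  have : S*r ≤ T := by rw [mul_comm]; exact hT
  linarith

lemma tri_mem (X : Set Plane) (hconv : Convex ℝ X)
    (p q z w : Plane) (hp : p ∈ X) (hq : q ∈ X) (hz : z ∈ X)
    (u v : Plane) (m xz az ξ η : ℝ)
    (hm : 0 < m) (ha : 0 < az)
    (hq_eq : q = p + m • u) (hz_eq : z = p + xz • u + az • v)
    (hw_eq : w = p + ξ • u + η • v)
    (h0 : 0 ≤ η) (h1 : 0 ≤ az*ξ - xz*η) (h2 : 0 ≤ az*(m-ξ) - (m-xz)*η) :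
    w ∈ X := by
  set l3 := η / az with hl3
  set l2 := (az*ξ - xz*η)/(az*m) with hl2
  set l1 := 1 - l2 - l3 with hl1
  have hl3' : l3 * az = η := by rw [hl3]; field_simp
  have hl2' : l2 * m + l3 * xz = ξ := by rw [hl2, hl3]; field_simp; ring
  have h3' : 0 ≤ l3 := div_nonneg h0 ha.le
  have h2'' : 0 ≤ l2 := div_nonneg h1 (by positivity)
  have h1'' : 0 ≤ l1 := by
    have he : l1 = (az*(m-ξ) - (m-xz)*η)/(az*m) := by
      rw [hl1, hl2, hl3]; field_simp; ring
    rw [he]; exact div_nonneg h2 (by positivity)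
  have hwc : w = l1 • p + l2 • q + l3 • z := by
    rw [hq_eq, hz_eq, hw_eq, hl1, ← hl2', ← hl3']
    module
  have hmem : l1 • p + l2 • q + l3 • z ∈ X := by
    have := hconv.sum_mem (t := (Finset.univ : Finset (Fin 3)))
      (w := ![l1, l2, l3]) (z := ![p, q, z])
      (by intro i _; fin_cases i <;> simpa)
      (by simp [Fin.sum_univ_three, hl1]; ring)
      (by intro i _; fin_cases i <;> simpa)
    simpa [Fin.sum_univ_three] using this
  rw [hwc]; exact hmem

lemma deep (X : Set Plane) (hconv : Convex ℝ X)
    (u v : Plane)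
    (hexp : ∀ d : Plane, d = (inner ℝ d u : ℝ) • u + (inner ℝ d v : ℝ) • v)
    (hnsq : ∀ α β : ℝ, ‖α • u + β • v‖^2 = α^2 + β^2)
    (p q zp zm : Plane) (hp : p ∈ X) (hq : q ∈ X) (hzp : zp ∈ X) (hzm : zm ∈ X)
    (m a b x x' : ℝ)
    (hq_eq : q = p + m • u)
    (hzp_eq : zp = p + x • u + a • v)
    (hzm_eq : zm = p + x' • u + (-b) • v)
    (hm : 7 ≤ m) (hab : 7 ≤ a + b) (hba : b ≤ a) (hb0 : 0 ≤ b) (hmab : a + b ≤ m)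
    (c1 : x^2 + a^2 ≤ m^2) (c2 : (m-x)^2 + a^2 ≤ m^2)
    (c3 : x'^2 + b^2 ≤ m^2) (c4 : (m-x')^2 + b^2 ≤ m^2) :
    ∃ c : Plane, Metric.closedBall c (283/200) ⊆ X := by
  have ha : 7/2 ≤ a := by linarith
  have ha0 : (0:ℝ) < a := by linarith
  have hm0 : (0:ℝ) < m := by linarith
  have hx0 : 0 ≤ x := by nlinarith
  have hxm : x ≤ m := by nlinarith
  have hx'0 : 0 ≤ x' := by nlinarith
  have hx'm : x' ≤ m := by nlinarith
  refine ⟨p + ((m+x+x')/4) • u + ((a-b)/4) • v, ?_⟩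
  intro w hw
  have hwd : dist w (p + ((m+x+x')/4) • u + ((a-b)/4) • v) ≤ 283/200 :=
    Metric.mem_closedBall.mp hw
  obtain ⟨ξ, hξ⟩ : ∃ t : ℝ, (inner ℝ (w-p) u : ℝ) = t := ⟨_, rfl⟩
  obtain ⟨η, hη⟩ : ∃ t : ℝ, (inner ℝ (w-p) v : ℝ) = t := ⟨_, rfl⟩
  have h := hexp (w - p)
  rw [hξ, hη] at h
  have hw_eq0 : w = p + ξ • u + η • v := by
    have h2 := sub_eq_iff_eq_add'.mp h
    rw [h2]; module
  have hdiff : w - (p + ((m+x+x')/4) • u + ((a-b)/4) • v)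
      = (ξ - (m+x+x')/4) • u + (η - (a-b)/4) • v := by
    rw [hw_eq0]; module
  have hd2 : (ξ - (m+x+x')/4)^2 + (η - (a-b)/4)^2 ≤ (283/200)^2 := by
    have h1 : ‖w - (p + ((m+x+x')/4) • u + ((a-b)/4) • v)‖ ≤ 283/200 := by
      rw [← dist_eq_norm]; exact hwd
    rw [hdiff] at h1
    calc (ξ - (m+x+x')/4)^2 + (η - (a-b)/4)^2
        = ‖(ξ - (m+x+x')/4) • u + (η - (a-b)/4) • v‖^2 := (hnsq _ _).symm
    _ ≤ (283/200)^2 := by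
        apply pow_le_pow_left₀ (norm_nonneg _) h1
  have cond1 : 0 ≤ a*ξ - x*η := by
    have hk := k1 a b m x hb0 hba hab hm hx0 c1
    have hT : (283/200) * Real.sqrt (a^2 + (-x)^2) ≤ a*((m+x+x')/4) - x*((a-b)/4) := by
      have hrw : a^2 + (-x)^2 = x^2 + a^2 := by ring
      rw [hrw]
      nlinarith [Real.sqrt_nonneg (x^2+a^2), mul_nonneg ha0.le hx'0]
    have hcs := cs_shift a (-x) (ξ - (m+x+x')/4) (η - (a-b)/4) (283/200)
      (a*((m+x+x')/4) - x*((a-b)/4)) hd2 (by norm_num) hT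
    linarith [hcs]
  have cond2 : 0 ≤ a*(m-ξ) - (m-x)*η := by
    have hk := k1 a b m (m-x) hb0 hba hab hm (by linarith) c2
    have hT : (283/200) * Real.sqrt ((-a)^2 + (-(m-x))^2)
        ≤ a*(m-(m+x+x')/4) - (m-x)*((a-b)/4) := by
      have hrw : (-a)^2 + (-(m-x))^2 = (m-x)^2 + a^2 := by ring
      rw [hrw]
      nlinarith [Real.sqrt_nonneg ((m-x)^2+a^2), mul_nonneg ha0.le (show (0:ℝ) ≤ m - x' by linarith)]
    have hcs := cs_shift (-a) (-(m-x)) (ξ - (m+x+x')/4) (η - (a-b)/4) (283/200)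
      (a*(m-(m+x+x')/4) - (m-x)*((a-b)/4)) hd2 (by norm_num) hT
    linarith [hcs]
  rcases le_or_gt (283/50) (a - b) with hcase | hcase
  · have hη0 : 0 ≤ η := by
      nlinarith [sq_nonneg (ξ - (m+x+x')/4), sq_nonneg (η - (a-b)/4 + 283/200)]
    exact tri_mem X hconv p q zp w hp hq hzp u v m x a ξ η hm0 ha0 hq_eq hzp_eq hw_eq0 hη0 cond1 cond2
  · rcases le_or_gt 0 η with hη0 | hη0
    · exact tri_mem X hconv p q zp w hp hq hzp u v m x a ξ η hm0 ha0 hq_eq hzp_eq hw_eq0 hη0 cond1 cond2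
    · have hbpos : (0:ℝ) < b := by linarith
      have cond3 : 0 ≤ b*ξ + x'*η := by
        have hk := k2 a b m x' hb0 hba hab hm hmab hx'0 c3
        have hT : (283/200) * Real.sqrt (b^2 + x'^2) ≤ b*((m+x+x')/4) + x'*((a-b)/4) := by
          have hrw : b^2 + x'^2 = x'^2 + b^2 := by ring
          rw [hrw]
          nlinarith [Real.sqrt_nonneg (x'^2+b^2), mul_nonneg hb0 hx0]
        have hcs := cs_shift b x' (ξ - (m+x+x')/4) (η - (a-b)/4) (283/200)
          (b*((m+x+x')/4) + x'*((a-b)/4)) hd2 (by norm_num) hT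
        linarith [hcs]
      have cond4 : 0 ≤ b*(m-ξ) + (m-x')*η := by
        have hk := k2 a b m (m-x') hb0 hba hab hm hmab (by linarith) c4
        have hT : (283/200) * Real.sqrt ((-b)^2 + (m-x')^2)
            ≤ b*(m-(m+x+x')/4) + (m-x')*((a-b)/4) := by
          have hrw : (-b)^2 + (m-x')^2 = (m-x')^2 + b^2 := by ring
          rw [hrw]
          nlinarith [Real.sqrt_nonneg ((m-x')^2+b^2), mul_nonneg hb0 (show (0:ℝ) ≤ m - x by linarith)]
        have hcs := cs_shift (-b) (m-x') (ξ - (m+x+x')/4) (η - (a-b)/4) (283/200)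
          (b*(m-(m+x+x')/4) + (m-x')*((a-b)/4)) hd2 (by norm_num) hT
        linarith [hcs]
      have hzm_eq' : zm = p + x' • u + b • (-v) := by rw [hzm_eq]; module
      have hw_eq' : w = p + ξ • u + (-η) • (-v) := by rw [hw_eq0]; module
      have c3' : 0 ≤ b*ξ - x'*(-η) := by linarith [cond3]
      have c4' : 0 ≤ b*(m-ξ) - (m-x')*(-η) := by linarith [cond4]
      exact tri_mem X hconv p q zm w hp hq hzm u (-v) m x' b ξ (-η) hm0 hbpos hq_eq hzm_eq' hw_eq'
        (by linarith) c3' c4'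

lemma unitSquare_dist {A B : Plane} (hA : A ∈ unitSquare) (hB : B ∈ unitSquare) :
    dist A B ≤ Real.sqrt 2 := by
  rw [EuclideanSpace.dist_eq]
  apply Real.sqrt_le_sqrt
  have key : ∀ (r t : ℝ), r ∈ Set.Icc (0:ℝ) 1 → t ∈ Set.Icc (0:ℝ) 1 → dist r t ^ 2 ≤ 1 := by
    intro r t hr ht
    rw [Real.dist_eq, sq_abs]
    nlinarith [hr.1, hr.2, ht.1, ht.2]
  rw [Fin.sum_univ_two]
  have h1 := key (A 0) (B 0) (hA 0) (hB 0)
  have h2 := key (A 1) (B 1) (hA 1) (hB 1)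
  linarith

lemma main (X Y : Set Plane)
    (hXcomp : IsCompact X) (hXconv : Convex ℝ X) (hXint : (interior X).Nonempty)
    (hYconv : Convex ℝ Y) (hYne : Y.Nonempty)
    (hYX : ¬ ContainedUnderTranslation Y X)
    (hsmall : ∀ t : Plane, ContainedUnderTranslation (X ∩ (t +ᵥ Y)) unitSquare) :
    width X ≤ 7 := by
  by_contra hcon
  push_neg at hcon
  obtain ⟨x0, hx0⟩ : X.Nonempty := ⟨_, interior_subset hXint.some_mem⟩
  have hXne : X.Nonempty := ⟨x0, hx0⟩
  -- continuity of inner products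
  have hcont : ∀ z : Plane, Continuous (fun p : Plane => (inner ℝ p z : ℝ)) :=
    fun z => continuous_id.inner continuous_const
  -- bddBelow of the width set
  have hbdd : BddBelow {w : ℝ | ∃ u : Plane, ‖u‖ = 1 ∧
      w = sSup ((fun p => (inner ℝ p u : ℝ)) '' X) - sInf ((fun p => (inner ℝ p u : ℝ)) '' X)} := by
    refine ⟨0, ?_⟩
    rintro w ⟨u, hu, rfl⟩
    have himg : IsCompact ((fun p => (inner ℝ p u : ℝ)) '' X) := hXcomp.image (hcont u)
    have := csInf_le_csSup (hXne.image _) himg.bddBelow himg.bddAbove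
    linarith
  have hgt : ∀ u : Plane, ‖u‖ = 1 →
      7 < sSup ((fun p => (inner ℝ p u : ℝ)) '' X) - sInf ((fun p => (inner ℝ p u : ℝ)) '' X) :=
    fun u hu => lt_of_lt_of_le hcon (csInf_le hbdd ⟨u, hu, rfl⟩)
  -- maximizers and minimizers
  have hsup : ∀ z : Plane, ∃ w ∈ X, (∀ y ∈ X, (inner ℝ y z : ℝ) ≤ inner ℝ w z) ∧
      sSup ((fun p => (inner ℝ p z : ℝ)) '' X) = inner ℝ w z := by
    intro z
    obtain ⟨w, hwX, hw⟩ := hXcomp.exists_isMaxOn hXne (hcont z).continuousOn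
    exact ⟨w, hwX, fun y hy => hw hy,
      IsGreatest.csSup_eq ⟨⟨w, hwX, rfl⟩, by rintro r ⟨y, hy, rfl⟩; exact hw hy⟩⟩
  have hinf : ∀ z : Plane, ∃ w ∈ X, (∀ y ∈ X, (inner ℝ w z : ℝ) ≤ inner ℝ y z) ∧
      sInf ((fun p => (inner ℝ p z : ℝ)) '' X) = inner ℝ w z := by
    intro z
    obtain ⟨w, hwX, hw⟩ := hXcomp.exists_isMinOn hXne (hcont z).continuousOn
    exact ⟨w, hwX, fun y hy => hw hy,
      IsLeast.csInf_eq ⟨⟨w, hwX, rfl⟩, by rintro r ⟨y, hy, rfl⟩; exact hw hy⟩⟩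
  -- the diameter
  have hdiam : ∃ pq ∈ X ×ˢ X, ∀ z ∈ X ×ˢ X, dist z.1 z.2 ≤ dist pq.1 pq.2 := by
    have hcontd : Continuous (fun z : Plane × Plane => dist z.1 z.2) :=
      continuous_fst.dist continuous_snd
    obtain ⟨pq, hmem, hmax⟩ := (hXcomp.prod hXcomp).exists_isMaxOn (hXne.prod hXne)
      hcontd.continuousOn
    exact ⟨pq, hmem, fun z hz => hmax hz⟩
  obtain ⟨⟨p, q⟩, hpqmem, hpqmax⟩ := hdiam
  have hpX : p ∈ X := hpqmem.1
  have hqX : q ∈ X := hpqmem.2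
  have hdistle : ∀ w1 ∈ X, ∀ w2 ∈ X, dist w1 w2 ≤ dist p q := by
    intro w1 h1 w2 h2
    exact hpqmax (w1, w2) (Set.mk_mem_prod h1 h2)
  -- extent in any unit direction is less than the diameter
  have hext_le : ∀ z : Plane, ‖z‖ = 1 →
      sSup ((fun p => (inner ℝ p z : ℝ)) '' X) - sInf ((fun p => (inner ℝ p z : ℝ)) '' X) ≤ dist p q := by
    intro z hz
    obtain ⟨w1, hw1X, _, hsup1⟩ := hsup z
    obtain ⟨w2, hw2X, _, hinf1⟩ := hinf z
    rw [hsup1, hinf1]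
    have h1 : (inner ℝ w1 z : ℝ) - inner ℝ w2 z = inner ℝ (w1 - w2) z := by
      rw [inner_sub_left]
    rw [h1]
    calc (inner ℝ (w1 - w2) z : ℝ) ≤ ‖w1 - w2‖ * ‖z‖ := real_inner_le_norm _ _
    _ = dist w1 w2 := by rw [hz, mul_one, dist_eq_norm]
    _ ≤ dist p q := hdistle w1 hw1X w2 hw2X
  have hm7 : 7 < dist p q := by
    have he0 : ‖(EuclideanSpace.single 0 1 : Plane)‖ = 1 := by
      rw [EuclideanSpace.norm_single]; norm_num
    exact lt_of_lt_of_le (hgt _ he0) (hext_le _ he0)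
  set m : ℝ := dist p q with hm
  have hm0 : (0:ℝ) < m := by linarith
  -- the unit vector u in the direction of the diameter
  set u : Plane := (1/m) • (q - p) with hu_def
  have hqp_norm : ‖q - p‖ = m := by rw [hm, dist_comm, dist_eq_norm]
  have hu : ‖u‖ = 1 := by
    rw [hu_def, norm_smul, hqp_norm]
    simp [abs_of_pos hm0]
    field_simp
  have hq_eq : q = p + m • u := by
    rw [hu_def, smul_smul]
    rw [mul_one_div, div_self (ne_of_gt hm0), one_smul]
    abel
  -- coordinates of u
  have husq : (u 0)^2 + (u 1)^2 = 1 := by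
    have h1 := EuclideanSpace.norm_eq u
    rw [hu] at h1
    have h2 : Real.sqrt (∑ i, ‖u i‖^2) = 1 := h1.symm
    have h3 := Real.sqrt_eq_one.mp h2
    simpa [Fin.sum_univ_two, Real.norm_eq_abs, sq_abs] using h3
  -- the rotated vector v
  set v : Plane := (-(u 1)) • (EuclideanSpace.single 0 1) + (u 0) • (EuclideanSpace.single 1 1)
    with hv_def
  have hv0 : v 0 = -(u 1) := by
    simp [hv_def, EuclideanSpace.single_apply]
  have hv1 : v 1 = u 0 := by
    simp [hv_def, EuclideanSpace.single_apply]
  have hip : ∀ (w z : Plane), (inner ℝ w z : ℝ) = w 0 * z 0 + w 1 * z 1 := by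
    intro w z
    simp [PiLp.inner_apply, RCLike.inner_apply, Fin.sum_univ_two]; ring
  have hv : ‖v‖ = 1 := by
    rw [EuclideanSpace.norm_eq, Fin.sum_univ_two, Real.norm_eq_abs, Real.norm_eq_abs,
      sq_abs, sq_abs, hv0, hv1]
    rw [show (-(u 1))^2 + (u 0)^2 = 1 by nlinarith [husq]]
    exact Real.sqrt_one
  have hexp : ∀ d : Plane, d = (inner ℝ d u : ℝ) • u + (inner ℝ d v : ℝ) • v := by
    intro d
    refine PiLp.ext ?_
    intro i
    fin_cases i
    · show d 0 = ((inner ℝ d u : ℝ) • u + (inner ℝ d v : ℝ) • v) 0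
      simp only [PiLp.add_apply, PiLp.smul_apply, smul_eq_mul, hip, hv0, hv1]
      linear_combination (-(d 0)) * husq
    · show d 1 = ((inner ℝ d u : ℝ) • u + (inner ℝ d v : ℝ) • v) 1
      simp only [PiLp.add_apply, PiLp.smul_apply, smul_eq_mul, hip, hv0, hv1]
      linear_combination (-(d 1)) * husq
  have hnsq : ∀ α β : ℝ, ‖α • u + β • v‖^2 = α^2 + β^2 := by
    intro α β
    rw [EuclideanSpace.norm_eq, Fin.sum_univ_two]
    rw [Real.sq_sqrt (by positivity)]
    simp only [PiLp.add_apply, PiLp.smul_apply, smul_eq_mul, Real.norm_eq_abs, sq_abs,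
      hv0, hv1]
    linear_combination (α^2 + β^2) * husq
  -- maximizer/minimizer in direction v
  obtain ⟨zp, hzpX, hzpmax, hsupv⟩ := hsup v
  obtain ⟨zm, hzmX, hzmmin, hinfv⟩ := hinf v
  set a : ℝ := (inner ℝ zp v : ℝ) - inner ℝ p v with ha_def
  set b : ℝ := (inner ℝ p v : ℝ) - inner ℝ zm v with hb_def
  have ha0 : 0 ≤ a := by have := hzpmax p hpX; linarith
  have hb0 : 0 ≤ b := by have := hzmmin p hpX; linarith
  have hab7 : 7 ≤ a + b := by
    have := hgt v hv
    rw [hsupv, hinfv] at this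
    rw [ha_def, hb_def]; linarith
  have habm : a + b ≤ m := by
    have h1 : a + b = inner ℝ (zp - zm) v := by rw [inner_sub_left, ha_def, hb_def]; ring
    rw [h1]
    calc (inner ℝ (zp - zm) v : ℝ) ≤ ‖zp - zm‖ * ‖v‖ := real_inner_le_norm _ _
    _ = dist zp zm := by rw [hv, mul_one, dist_eq_norm]
    _ ≤ m := hdistle zp hzpX zm hzmX
  set x : ℝ := (inner ℝ (zp - p) u : ℝ) with hx_def
  set x' : ℝ := (inner ℝ (zm - p) u : ℝ) with hx'_def
  have hzp_eq : zp = p + x • u + a • v := by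
    have h := hexp (zp - p)
    rw [show (inner ℝ (zp - p) v : ℝ) = a by rw [inner_sub_left, ha_def]] at h
    rw [← hx_def] at h
    have h2 := sub_eq_iff_eq_add'.mp h
    rw [h2]; module
  have hzm_eq : zm = p + x' • u + (-b) • v := by
    have h := hexp (zm - p)
    rw [show (inner ℝ (zm - p) v : ℝ) = -b by rw [inner_sub_left, hb_def]; ring] at h
    rw [← hx'_def] at h
    have h2 := sub_eq_iff_eq_add'.mp h
    rw [h2]; module
  -- coordinate constraints
  have hsq_le : ∀ (z w : Plane) (α β : ℝ), z ∈ X → w ∈ X → z - w = α • u + β • v →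
      α^2 + β^2 ≤ m^2 := by
    intro z w α β hz hw he
    have h1 : ‖z - w‖ ≤ m := by rw [← dist_eq_norm]; exact hdistle z hz w hw
    have h2 : ‖z - w‖^2 ≤ m^2 := pow_le_pow_left₀ (norm_nonneg _) h1 2
    rw [he, hnsq] at h2
    exact h2
  have c1 : x^2 + a^2 ≤ m^2 := hsq_le zp p x a hzpX hpX (by rw [hzp_eq]; module)
  have c2 : (m-x)^2 + a^2 ≤ m^2 := by
    have h := hsq_le zp q (x - m) a hzpX hqX (by rw [hzp_eq, hq_eq]; module)
    nlinarith [h]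
  have c3 : x'^2 + b^2 ≤ m^2 := by
    have h := hsq_le zm p x' (-b) hzmX hpX (by rw [hzm_eq]; module)
    nlinarith [h]
  have c4 : (m-x')^2 + b^2 ≤ m^2 := by
    have h := hsq_le zm q (x' - m) (-b) hzmX hqX (by rw [hzm_eq, hq_eq]; module)
    nlinarith [h]
  -- apply the deep point lemma (with the WLOG swap)
  have hdeep : ∃ c : Plane, Metric.closedBall c (283/200) ⊆ X := by
    rcases le_total b a with hba | hba
    · exact deep X hXconv u v hexp hnsq p q zp zm hpX hqX hzpX hzmX m a b x x'
        hq_eq hzp_eq hzm_eq hm7.le hab7 hba hb0 habm c1 c2 c3 c4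
    · have hexp' : ∀ d : Plane, d = (inner ℝ d u : ℝ) • u + (inner ℝ d (-v) : ℝ) • (-v) := by
        intro d
        rw [inner_neg_right, neg_smul, smul_neg, neg_neg]
        exact hexp d
      have hnsq' : ∀ α β : ℝ, ‖α • u + β • (-v)‖^2 = α^2 + β^2 := by
        intro α β
        rw [show α • u + β • (-v) = α • u + (-β) • v by module, hnsq]
        ring
      exact deep X hXconv u (-v) hexp' hnsq' p q zm zp hpX hqX hzmX hzpX m b a x' x
        hq_eq (by rw [hzm_eq]; module) (by rw [hzp_eq]; module)
        hm7.le (by linarith) hba ha0 (by linarith)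
        c3 c4 c1 c2
  obtain ⟨c, hball⟩ := hdeep
  -- final contradiction using Y
  have hr2 : Real.sqrt 2 < 283/200 := by
    rw [show (283:ℝ)/200 = Real.sqrt ((283/200)^2) by rw [Real.sqrt_sq (by norm_num)]]
    apply Real.sqrt_lt_sqrt (by norm_num)
    norm_num
  obtain ⟨y0, hy0⟩ := hYne
  by_cases hcase : ∀ y1 ∈ Y, ∀ y2 ∈ Y, dist y1 y2 ≤ 283/200
  · apply hYX
    refine ⟨c - y0, fun z hz => ?_⟩
    obtain ⟨y, hy, rfl⟩ := hz
    apply hball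
    rw [Metric.mem_closedBall]
    show dist ((c - y0) + y) c ≤ 283/200
    rw [dist_eq_norm, show (c - y0) + y - c = y - y0 by abel, ← dist_eq_norm]
    exact hcase y hy y0 hy0
  · push_neg at hcase
    obtain ⟨y1, hy1, y2, hy2, hd⟩ := hcase
    set r : ℝ := dist y1 y2 with hr_def
    have hrpos : (0:ℝ) < r := by linarith [dist_nonneg (x := y1) (y := y2)]
    set σ : ℝ := (283/200)/r with hσ_def
    have hσ0 : 0 < σ := by positivity
    have hσ1 : σ ≤ 1 := by
      rw [hσ_def, div_le_one hrpos]; linarith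
    have hy' : y1 + σ • (y2 - y1) ∈ Y := by
      have h := hYconv hy1 hy2 (by linarith : (0:ℝ) ≤ 1 - σ) hσ0.le (by ring)
      have he : (1-σ) • y1 + σ • y2 = y1 + σ • (y2 - y1) := by module
      rwa [he] at h
    have hP2dist : dist (c + σ • (y2 - y1)) c = 283/200 := by
      rw [dist_eq_norm, show c + σ • (y2 - y1) - c = σ • (y2 - y1) by abel, norm_smul,
        Real.norm_eq_abs, abs_of_pos hσ0]
      rw [show ‖y2 - y1‖ = r by rw [hr_def, dist_comm, dist_eq_norm], hσ_def]
      field_simp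
    have hP1 : c ∈ X ∩ ((c - y1) +ᵥ Y) := by
      constructor
      · exact hball (Metric.mem_closedBall_self (by norm_num))
      · exact ⟨y1, hy1, by show (c - y1) + y1 = c; abel⟩
    have hP2 : c + σ • (y2 - y1) ∈ X ∩ ((c - y1) +ᵥ Y) := by
      constructor
      · apply hball; rw [Metric.mem_closedBall, hP2dist]
      · exact ⟨y1 + σ • (y2 - y1), hy', by show (c - y1) + (y1 + σ • (y2 - y1)) = c + σ • (y2 - y1); abel⟩
    obtain ⟨vv, hvv⟩ := hsmall (c - y1)
    have h1 : vv + c ∈ unitSquare := hvv (Set.vadd_mem_vadd_set hP1)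
    have h2 : vv + (c + σ • (y2 - y1)) ∈ unitSquare := hvv (Set.vadd_mem_vadd_set hP2)
    have h3 := unitSquare_dist h1 h2
    rw [dist_add_left] at h3
    rw [dist_comm, hP2dist] at h3
    linarith

theorem bounded_width (X Y : Set Plane)
    (hXcomp : IsCompact X) (hXconv : Convex ℝ X) (hXint : (interior X).Nonempty)
    (hYcomp : IsCompact Y) (hYconv : Convex ℝ Y) (hYint : (interior Y).Nonempty)
    (hXY : ¬ ContainedUnderTranslation X Y)
    (hYX : ¬ ContainedUnderTranslation Y X)
    (hsmall : ∀ t : Plane, ContainedUnderTranslation (X ∩ (t +ᵥ Y)) unitSquare) :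
    width X ≤ 7 ∧ width Y ≤ 7 := by
  constructor
  · exact main X Y hXcomp hXconv hXint hYconv ⟨_, interior_subset hYint.some_mem⟩ hYX hsmall
  · apply main Y X hYcomp hYconv hYint hXconv ⟨_, interior_subset hXint.some_mem⟩ hXY
    intro t
    obtain ⟨v, hv⟩ := hsmall (-t)
    refine ⟨v + -t, fun z hz => ?_⟩
    obtain ⟨y, hy, rfl⟩ := hz
    obtain ⟨hyY, hyX⟩ := hy
    obtain ⟨xx, hxx, hxy⟩ := hyX
    apply hv
    refine ⟨-t + y, ⟨?_, ?_⟩, ?_⟩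
    · have hxeq : -t + y = xx := by
        rw [← hxy]; show -t + (t + xx) = xx; abel
      rw [hxeq]; exact hxx
    · exact ⟨y, hyY, rfl⟩
    · show v + (-t + y) = (v + -t) + y
      abel
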